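/- Let G be a finite simple claw-free graph and K a clique such that α(G \ K) ≤ 2 and such that no clique of size at most |K|+1 is Tihany. Then χ(G) = |V(G)| − μ(G^c), where G^c is the complement of G and μ denotes the maximum matching number. -/

import Mathlib

open SimpleGraph

/-- A graph is claw-free if it has no induced `K_{1,3}`. -/
def ClawFree {V : Type*} (G : SimpleGraph V) : Prop :=
  ¬ ∃ u a b c : V, a ≠ b ∧ a ≠ c ∧ b ≠ c ∧
    G.Adj u a ∧ G.Adj u b ∧ G.Adj u c ∧ ¬ G.Adj a b ∧ ¬ G.Adj a c ∧ ¬ G.Adj b c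

/-- The maximum matching number of a graph. -/
noncomputable def matchNum {V : Type*} (G : SimpleGraph V) : ℕ :=
  sSup {n | ∃ M : G.Subgraph, M.IsMatching ∧ M.edgeSet.ncard = n}

/-- The stability (independence) number: the clique number of the complement. -/
noncomputable def alphaNum {V : Type*} (G : SimpleGraph V) : ℕ := Gᶜ.cliqueNum

lemma aux_bddAbove {V : Type*} [Fintype V] (G : SimpleGraph V) :
    BddAbove {n | ∃ M : G.Subgraph, M.IsMatching ∧ M.edgeSet.ncard = n} := by
  classical
  refine ⟨Nat.card (Sym2 V), ?_⟩
  rintro n ⟨M, -, rfl⟩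
  simpa [Set.ncard_univ] using Set.ncard_le_ncard (Set.subset_univ M.edgeSet) Set.finite_univ

lemma aux_colorable_of_matching {V : Type*} [Fintype V] (G : SimpleGraph V)
    (M : Gᶜ.Subgraph) (hM : M.IsMatching) :
    G.Colorable (Fintype.card V - M.edgeSet.ncard) := by
  classical
  letI : LinearOrder V := LinearOrder.lift' (Fintype.equivFin V) (Fintype.equivFin V).injective
  have hpart : ∀ v, v ∈ M.verts → ∃ w, M.Adj v w := fun v hv => (hM hv).exists
  set p : V → V := fun v => if h : v ∈ M.verts then (hpart v h).choose else v with hp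
  have hpadj : ∀ {v}, v ∈ M.verts → M.Adj v (p v) := by
    intro v hv
    simp only [hp, dif_pos hv]
    exact (hpart v hv).choose_spec
  have huniq : ∀ {v w w'}, M.Adj v w → M.Adj v w' → w = w' := by
    intro v w w' h1 h2
    obtain ⟨u, -, hu⟩ := hM (M.edge_vert h1)
    rw [hu w h1, hu w' h2]
  set r : V → V := fun v => if h : v ∈ M.verts then min v (p v) else v with hr
  have hrcases : ∀ v, r v = v ∨ M.Adj v (r v) := by
    intro v
    by_cases hv : v ∈ M.verts
    · simp only [hr, dif_pos hv]
      rcases min_cases v (p v) with ⟨h, -⟩ | ⟨h, -⟩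
      · left; exact h
      · right; rw [h]; exact hpadj hv
    · left; simp [hr, hv]
  have hMadj_ne : ∀ {a b}, M.Adj a b → ¬ G.Adj a b := by
    intro a b h
    exact ((compl_adj _ _ _).mp (M.adj_sub h)).2
  have hvalid : ∀ {a b}, G.Adj a b → r a ≠ r b := by
    intro a b hab heq
    have hne : a ≠ b := hab.ne
    rcases hrcases a with ha | ha <;> rcases hrcases b with hb | hb
    · exact hne (by rw [← ha, ← hb, heq])
    · rw [← heq, ha] at hb
      exact hMadj_ne hb hab.symm
    · rw [heq, hb] at ha
      exact hMadj_ne ha hab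
    · rw [heq] at ha
      exact hne (huniq (M.adj_symm ha) (M.adj_symm hb))
  have hpp : ∀ {v}, v ∈ M.verts → p (p v) = v := by
    intro v hv
    have h1 := hpadj hv
    have h2 : p v ∈ M.verts := M.edge_vert h1.symm
    exact huniq (hpadj h2) h1.symm
  have hfix : ∀ v, r (r v) = r v := by
    intro v
    by_cases hv : v ∈ M.verts
    · have hrv : r v = min v (p v) := by simp only [hr, dif_pos hv]
      rcases min_cases v (p v) with ⟨h, -⟩ | ⟨h, -⟩
      · rw [hrv, h, hrv, h]
      · have h2 : p v ∈ M.verts := M.edge_vert (hpadj hv).symm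
        rw [hrv, h]
        simp only [hr, dif_pos h2, hpp hv]
        rw [min_comm]
        exact h
    · simp [hr, hv]
  have hrange : Set.range r = {v | r v = v} := by
    ext v
    constructor
    · rintro ⟨u, rfl⟩; exact hfix u
    · intro h; exact ⟨v, h⟩
  let C : G.Coloring (Set.range r) :=
    Coloring.mk (fun v => ⟨r v, Set.mem_range_self v⟩)
      (fun hab => by simpa [Subtype.ext_iff] using hvalid hab)
  letI : Fintype ↥(Set.range r) := Fintype.ofFinite _
  refine C.colorable.mono ?_
  have hfin : (Set.range r).ncard = Fintype.card ↥(Set.range r) := by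
    rw [Set.ncard_eq_toFinset_card', Set.toFinset_card]
  set B : Set V := {v | r v ≠ v} with hB
  have hpeq : ∀ {x y}, M.Adj x y → p x = y := fun {x y} h => huniq (hpadj (M.edge_vert h)) h
  have hrB : ∀ {x y}, M.Adj x y → y ≤ x → r x = y := by
    intro x y h hle
    have hx : x ∈ M.verts := M.edge_vert h
    simp only [hr, dif_pos hx, hpeq h]
    exact min_eq_right hle
  have hkB : M.edgeSet.ncard ≤ B.ncard := by
    have hmax : ∀ e ∈ M.edgeSet,
        Sym2.lift ⟨fun a b => max a b, fun a b => max_comm a b⟩ e ∈ B ∧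
        s(Sym2.lift ⟨fun a b => max a b, fun a b => max_comm a b⟩ e,
          p (Sym2.lift ⟨fun a b => max a b, fun a b => max_comm a b⟩ e)) = e := by
      intro e he
      induction e with
      | _ x y =>
        have hxy : M.Adj x y := Subgraph.mem_edgeSet.mp he
        have hne : x ≠ y := (M.adj_sub hxy).ne
        simp only [Sym2.lift_mk]
        rcases max_cases x y with ⟨h1, h2⟩ | ⟨h1, h2⟩
        · rw [h1]
          have hrx : r x = y := hrB hxy h2
          refine ⟨fun hc => hne (hrx ▸ hc).symm, ?_⟩
          rw [hpeq hxy]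
        · rw [h1]
          have hry : r y = x := hrB hxy.symm h2.le
          refine ⟨fun hc => hne (hry ▸ hc), ?_⟩
          rw [hpeq hxy.symm, Sym2.eq_swap]
    refine Set.ncard_le_ncard_of_injOn
      (fun e => Sym2.lift ⟨fun a b => max a b, fun a b => max_comm a b⟩ e)
      (fun e he => (hmax e he).1) ?_ (Set.toFinite B)
    intro e1 h1 e2 h2 heq
    simp only at heq
    rw [← (hmax e1 h1).2, ← (hmax e2 h2).2, heq]
  have hsum : (Set.range r).ncard + B.ncard = Fintype.card V := by
    have hcompl : Set.range r = Bᶜ := by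
      rw [hrange]
      ext v
      simp [hB]
    rw [hcompl, ← compl_compl B, compl_compl]
    rw [Set.ncard_add_ncard_compl, Nat.card_eq_fintype_card]
  omega

lemma aux_matching_of_coloring {V : Type*} [Fintype V] (G : SimpleGraph V) (K : Finset V)
    (hα : alphaNum (G.induce ((↑K : Set V)ᶜ)) ≤ 2) {c' : ℕ}
    (C : (G.induce ((↑K : Set V)ᶜ)).Coloring (Fin c')) :
    ∃ M : Gᶜ.Subgraph, M.IsMatching ∧
      Fintype.card V ≤ M.edgeSet.ncard + K.card + c' := by
  classical
  rcases isEmpty_or_nonempty V with hV | hV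
  · exact ⟨⊥, by intro v hv; simp [Subgraph.verts_bot] at hv, by simp [Fintype.card_eq_zero]⟩
  set g : V → Option (Fin c') :=
    fun v => if h : v ∈ ((↑K : Set V)ᶜ) then some (C ⟨v, h⟩) else none with hg
  have hnotK : ∀ {v i}, g v = some i → v ∈ ((↑K : Set V)ᶜ) := by
    intro v i h
    by_contra hv
    simp only [hg] at h
    rw [dif_neg hv] at h
    cases h
  have hval : ∀ {v i} (h : v ∈ ((↑K : Set V)ᶜ)), g v = some i → C ⟨v, h⟩ = i := by
    intro v i h hgv
    simp only [hg] at hgv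
    rw [dif_pos h] at hgv
    exact Option.some_injective _ hgv
  have hnadj : ∀ {u v i}, u ≠ v → g u = some i → g v = some i → ¬ G.Adj u v := by
    intro u v i huv hu hv hadj
    have hu' := hnotK hu
    have hv' := hnotK hv
    have hHadj : (G.induce ((↑K : Set V)ᶜ)).Adj ⟨u, hu'⟩ ⟨v, hv'⟩ := by simpa using hadj
    exact C.valid hHadj (by rw [hval hu' hu, hval hv' hv])
  -- three distinct vertices with the same color contradict α ≤ 2
  have h3 : ∀ {u v w i}, u ≠ v → u ≠ w → v ≠ w →
      g u = some i → g v = some i → g w = some i → False := by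
    intro u v w i huv huw hvw hu hv hw
    letI : Fintype ((↑K : Set V)ᶜ : Set V) := Fintype.ofFinite _
    have hu' := hnotK hu
    have hv' := hnotK hv
    have hw' := hnotK hw
    have hadj' : ∀ {x y : V} (hx' : x ∈ ((↑K : Set V)ᶜ)) (hy' : y ∈ ((↑K : Set V)ᶜ)),
        x ≠ y → g x = some i → g y = some i →
        (G.induce ((↑K : Set V)ᶜ))ᶜ.Adj ⟨x, hx'⟩ ⟨y, hy'⟩ := by
      intro x y hx' hy' hxy hgx hgy
      rw [compl_adj]
      refine ⟨by simp [Subtype.ext_iff, hxy], ?_⟩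
      intro hadj
      exact hnadj hxy hgx hgy (by simpa using hadj)
    set s : Finset ((↑K : Set V)ᶜ : Set V) := {⟨u, hu'⟩, ⟨v, hv'⟩, ⟨w, hw'⟩} with hs
    have hclique : (G.induce ((↑K : Set V)ᶜ))ᶜ.IsClique (↑s : Set _) := by
      intro a ha b hb hab
      simp only [hs, Finset.coe_insert, Finset.coe_singleton, Set.mem_insert_iff,
        Set.mem_singleton_iff] at ha hb
      rcases ha with rfl | rfl | rfl <;> rcases hb with rfl | rfl | rfl
      · exact absurd rfl hab
      · exact hadj' hu' hv' huv hu hv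
      · exact hadj' hu' hw' huw hu hw
      · exact hadj' hv' hu' huv.symm hv hu
      · exact absurd rfl hab
      · exact hadj' hv' hw' hvw hv hw
      · exact hadj' hw' hu' huw.symm hw hu
      · exact hadj' hw' hv' hvw.symm hw hv
      · exact absurd rfl hab
    have hcard : s.card = 3 := by
      rw [hs]
      rw [Finset.card_insert_of_notMem (by simp [Subtype.ext_iff, huv, huw]),
        Finset.card_insert_of_notMem (by simp [Subtype.ext_iff, hvw]),
        Finset.card_singleton]
    have hle : s.card ≤ (G.induce ((↑K : Set V)ᶜ))ᶜ.cliqueNum :=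
      SimpleGraph.IsClique.card_le_cliqueNum (tc := hclique)
    rw [hcard] at hle
    have : (G.induce ((↑K : Set V)ᶜ))ᶜ.cliqueNum ≤ 2 := hα
    omega
  -- build the matching
  set R : V → V → Prop := fun u v => u ≠ v ∧ ∃ i, g u = some i ∧ g v = some i with hR
  have hRsymm : ∀ {u v}, R u v → R v u := by
    rintro u v ⟨h1, i, h2, h3⟩
    exact ⟨h1.symm, i, h3, h2⟩
  have hRsub : ∀ {u v}, R u v → Gᶜ.Adj u v := by
    rintro u v ⟨h1, i, h2, h3⟩
    rw [compl_adj]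
    exact ⟨h1, hnadj h1 h2 h3⟩
  set M : Gᶜ.Subgraph :=
    { verts := {v | ∃ u, R v u}
      Adj := R
      adj_sub := fun h => hRsub h
      edge_vert := fun {u v} h => ⟨v, h⟩
      symm := ⟨fun u v h => hRsymm h⟩ } with hMdef
  have hmatch : M.IsMatching := by
    intro v hv
    obtain ⟨u, hu⟩ := hv
    refine ⟨u, hu, ?_⟩
    intro w hw
    by_contra hne
    obtain ⟨hvu, i, hgv, hgu⟩ := hu
    obtain ⟨hvw, j, hgv', hgw⟩ := hw
    have hij : j = i := by
      rw [hgv] at hgv'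
      exact (Option.some_injective _ hgv').symm
    rw [hij] at hgw
    exact h3 hvu hvw (fun h => hne h.symm) hgv hgu hgw
  refine ⟨M, hmatch, ?_⟩
  -- counting
  set cls : Fin c' → Finset V := fun i => Finset.univ.filter (fun v => g v = some i) with hcls
  have hmemcls : ∀ {v i}, v ∈ cls i ↔ g v = some i := by
    intro v i
    simp [hcls]
  have hcls2 : ∀ i, (cls i).card ≤ 2 := by
    intro i
    by_contra hcon
    push_neg at hcon
    obtain ⟨u, hu, v, hv, w, hw, huv, huw, hvw⟩ := Finset.two_lt_card.mp hcon
    exact h3 huv huw hvw (hmemcls.mp hu) (hmemcls.mp hv) (hmemcls.mp hw)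
  have hcover : Fintype.card V ≤ K.card + ∑ i, (cls i).card := by
    have hsub : Finset.univ ⊆ K ∪ Finset.univ.biUnion (fun i => cls i) := by
      intro v _
      by_cases hvK : v ∈ K
      · exact Finset.mem_union_left _ hvK
      · refine Finset.mem_union_right _ ?_
        have hv' : v ∈ ((↑K : Set V)ᶜ) := by simpa using hvK
        refine Finset.mem_biUnion.mpr ⟨C ⟨v, hv'⟩, Finset.mem_univ _, hmemcls.mpr ?_⟩
        simp only [hg]
        rw [dif_pos hv']
    exact le_trans (by rw [← Finset.card_univ]; exact Finset.card_le_card hsub)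
      (le_trans (Finset.card_union_le _ _) (by gcongr; exact Finset.card_biUnion_le))
  set D : Finset (Fin c') := Finset.univ.filter (fun i => (cls i).card = 2) with hD
  have hsumle : ∑ i, (cls i).card ≤ c' + D.card := by
    have : ∀ i : Fin c', (cls i).card ≤ 1 + if (cls i).card = 2 then 1 else 0 := by
      intro i
      have := hcls2 i
      split_ifs with h <;> omega
    calc ∑ i, (cls i).card ≤ ∑ i : Fin c', (1 + if (cls i).card = 2 then 1 else 0) :=
          Finset.sum_le_sum (fun i _ => this i)
      _ = c' + D.card := by
          rw [Finset.sum_add_distrib]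
          congr 1
          · simp
          · rw [hD, Finset.card_filter]
  rcases Nat.eq_zero_or_pos c' with hc0 | hc0
  · have : (Finset.univ : Finset (Fin c')) = ∅ := by
      subst hc0; rfl
    rw [this, Finset.sum_empty] at hcover
    omega
  have hDedge : D.card ≤ M.edgeSet.ncard := by
    have hef : M.edgeSet.Finite := Set.toFinite _
    rw [Set.ncard_eq_toFinset_card _ hef]
    have hpick : ∀ i ∈ D, ∃ a b : V, a ≠ b ∧ cls i = {a, b} := by
      intro i hi
      exact Finset.card_eq_two.mp (by simpa [hD] using hi)
    set f : Sym2 V → Fin c' := fun e => (g (Quot.out e).1).getD ⟨0, hc0⟩ with hf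
    refine Finset.card_le_card_of_surjOn f ?_
    intro i hi
    obtain ⟨a, b, hab, hcls_eq⟩ := hpick i hi
    have hga : g a = some i := by
      apply hmemcls.mp
      have h1 : a ∈ ({a, b} : Finset V) := Finset.mem_insert_self _ _
      exact hcls_eq.symm ▸ h1
    have hgb : g b = some i := by
      apply hmemcls.mp
      have h1 : b ∈ ({a, b} : Finset V) :=
        Finset.mem_insert_of_mem (Finset.mem_singleton_self _)
      exact hcls_eq.symm ▸ h1
    refine ⟨s(a, b), ?_, ?_⟩
    · simp only [Finset.coe_sort_coe, Finset.mem_coe, Set.Finite.mem_toFinset]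
      exact Subgraph.mem_edgeSet.mpr ⟨hab, i, hga, hgb⟩
    · have hout : s((Quot.out s(a, b)).1, (Quot.out s(a, b)).2) = s(a, b) := by
        exact Quot.out_eq _
      rcases Sym2.eq_iff.mp hout with ⟨h1, -⟩ | ⟨h1, -⟩
      · rw [hf]
        simp only
        rw [h1, hga]
        rfl
      · rw [hf]
        simp only
        rw [h1, hgb]
        rfl
  omega

lemma aux_colorable_of_induce {V : Type*} [Fintype V] (G : SimpleGraph V) (K : Finset V)
    {c' : ℕ} (h : (G.induce ((↑K : Set V)ᶜ)).Colorable c') : G.Colorable (c' + K.card) := by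
  classical
  obtain ⟨C⟩ := h
  have hcol : G.Colorable (Fintype.card (Fin c' ⊕ ↥K)) := by
    refine (Coloring.mk
      (fun v => if h : v ∈ (↑K : Set V) then (Sum.inr ⟨v, h⟩ : Fin c' ⊕ ↥K)
        else Sum.inl (C ⟨v, h⟩)) ?_).colorable
    intro u v hadj heq
    by_cases hu : u ∈ (↑K : Set V) <;> by_cases hv : v ∈ (↑K : Set V) <;>
      simp only [dif_pos, dif_neg, hu, hv] at heq
    · exact hadj.ne (by simpa [Subtype.ext_iff] using heq)
    · simp at heq
    · simp at heq
    · have : (G.induce ((↑K : Set V)ᶜ)).Adj ⟨u, hu⟩ ⟨v, hv⟩ := by simpa using hadj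
      exact C.valid this (by simpa using heq)
  simpa [Fintype.card_sum, Fintype.card_coe, Fintype.card_fin] using hcol

/-- Claim 1 of Theorem 5.4: if `G` is claw-free with `χ(G) > ω(G)`, `K` is a clique
with `α(G \ K) ≤ 2`, and no clique of size at most `|K| + 1` is Tihany, then
`χ(G) = |V(G)| - μ(Gᶜ)`. -/
theorem stmt6 {V : Type*} [Fintype V] (G : SimpleGraph V) (hcf : ClawFree G)
    (hχω : (G.cliqueNum : ℕ∞) < G.chromaticNumber)
    (K : Finset V) (hK : G.IsClique (↑K : Set V))
    (hα : alphaNum (G.induce ((↑K : Set V)ᶜ)) ≤ 2)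
    (hnoT : ∀ T : Finset V, G.IsClique (↑T : Set V) → T.card ≤ K.card + 1 →
      ¬ (G.chromaticNumber - (T.card : ℕ∞) + 1 ≤
          (G.induce ((↑T : Set V)ᶜ)).chromaticNumber)) :
    G.chromaticNumber = ((Fintype.card V - matchNum Gᶜ : ℕ) : ℕ∞) := by
  classical
  set n := Fintype.card V with hn
  have hfin : G.chromaticNumber ≠ ⊤ := by
    rw [SimpleGraph.chromaticNumber_ne_top_iff_exists]
    exact ⟨n, G.colorable_of_fintype⟩
  obtain ⟨c, hc⟩ : ∃ c : ℕ, G.chromaticNumber = (c : ℕ∞) :=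
    ⟨G.chromaticNumber.toNat, (ENat.coe_toNat hfin).symm⟩
  -- K.card ≤ c
  have hKc : K.card ≤ c := by
    have h1 : (K.card : ℕ∞) ≤ (G.cliqueNum : ℕ∞) :=
      Nat.cast_le.mpr (SimpleGraph.IsClique.card_le_cliqueNum (tc := hK))
    have h2 : (K.card : ℕ∞) < (c : ℕ∞) := lt_of_le_of_lt h1 (by rw [← hc]; exact hχω)
    exact (Nat.cast_lt.mp h2).le
  -- the non-Tihany hypothesis applied to K itself
  have hHle : (G.induce ((↑K : Set V)ᶜ)).chromaticNumber ≤ ((c - K.card : ℕ) : ℕ∞) := by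
    by_contra hlt
    push_neg at hlt
    apply hnoT K hK (Nat.le_succ _)
    have hsub : G.chromaticNumber - (K.card : ℕ∞) = ((c - K.card : ℕ) : ℕ∞) := by
      rw [hc, ENat.coe_sub]
    rw [hsub]
    exact (ENat.add_one_le_iff (by simp)).mpr hlt
  have hHcol : (G.induce ((↑K : Set V)ᶜ)).Colorable (c - K.card) :=
    SimpleGraph.chromaticNumber_le_iff_colorable.mp hHle
  obtain ⟨C⟩ := hHcol
  obtain ⟨M, hM, hcount⟩ := aux_matching_of_coloring G K hα C
  have hm1 : M.edgeSet.ncard ≤ matchNum Gᶜ :=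
    le_csSup (aux_bddAbove Gᶜ) ⟨M, hM, rfl⟩
  have hlow : n ≤ matchNum Gᶜ + c := by
    calc n ≤ M.edgeSet.ncard + K.card + (c - K.card) := hcount
    _ ≤ matchNum Gᶜ + K.card + (c - K.card) :=
        Nat.add_le_add_right (Nat.add_le_add_right hm1 _) _
    _ = matchNum Gᶜ + c := by omega
  -- upper bound: a maximum matching gives a coloring
  have hne : {k | ∃ M : Gᶜ.Subgraph, M.IsMatching ∧ M.edgeSet.ncard = k}.Nonempty := by
    refine ⟨0, ⊥, ?_, by simp⟩
    intro v hv
    simp [Subgraph.verts_bot] at hv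
  have hmem := Nat.sSup_mem hne (aux_bddAbove Gᶜ)
  obtain ⟨M₀, hM₀, hcard₀⟩ := hmem
  have hcol : G.Colorable (n - matchNum Gᶜ) := by
    have := aux_colorable_of_matching G M₀ hM₀
    rwa [hcard₀] at this
  have hupper : G.chromaticNumber ≤ ((n - matchNum Gᶜ : ℕ) : ℕ∞) :=
    SimpleGraph.chromaticNumber_le_iff_colorable.mpr hcol
  have hcle : c ≤ n - matchNum Gᶜ := by
    rw [hc] at hupper
    exact Nat.cast_le.mp hupper
  rw [hc]
  congr 1
  omega
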